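/- If L is piecewise-testable and L' is cofinite, then L ⧢ L' is piecewise-testable. -/

import Mathlib

open List

variable {A : Type*}

/-- Extract the subword of `x` at positions `K`. -/
def extractW (x : List A) (K : Finset (Fin x.length)) : List A :=
  ((List.finRange x.length).filter (fun i => i ∈ K)).map x.get

/-- `InterpW C u v x` : `x` is a shuffle of `u` and `v` with possible sharing of letters in `C`. -/
def InterpW (C : Set A) (u v x : List A) : Prop :=
  ∃ K K' : Finset (Fin x.length), K ∪ K' = Finset.univ ∧
    extractW x K = u ∧ extractW x K' = v ∧ ∀ a ∈ extractW x (K ∩ K'), a ∈ C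

/-- Interpolation product of languages. -/
def interpL (C : Set A) (L L' : Set (List A)) : Set (List A) :=
  {x | ∃ u ∈ L, ∃ v ∈ L', InterpW C u v x}

/-- Shuffle product of languages. -/
def shuffleL (L L' : Set (List A)) : Set (List A) := interpL ∅ L L'

/-- Simon's congruence: same scattered subwords of length at most `k`. -/
def SimK (k : ℕ) (u v : List A) : Prop :=
  ∀ w : List A, w.length ≤ k → (w.Sublist u ↔ w.Sublist v)

/-- Piecewise-testability: union of `∼ₖ`-classes for some `k`. -/
def PT (L : Set (List A)) : Prop :=
  ∃ k, ∀ u v : List A, SimK k u v → (u ∈ L ↔ v ∈ L)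

/-- A DFA is acyclic when every cycle is a self-loop. -/
def DFA.Acyclic {σ : Type*} (M : DFA A σ) : Prop :=
  ∀ p q (u v : List A), M.evalFrom p u = q → M.evalFrom q v = p → p = q

/-- A language is ℛ-trivial iff it is recognized by a finite acyclic DFA. -/
def RTrivial (L : Set (List A)) : Prop :=
  ∃ (σ : Type) (_ : Fintype σ) (M : DFA A σ), M.Acyclic ∧ ∀ x, x ∈ M.accepts ↔ x ∈ L

/-! ### Auxiliary lemmas -/

lemma simK_refl (k : ℕ) (u : List A) : SimK k u u := fun _ _ => Iff.rfl

lemma simK_symm {k : ℕ} {u v : List A} (h : SimK k u v) : SimK k v u :=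
  fun w hw => (h w hw).symm

lemma simK_trans {k : ℕ} {u v w : List A} (h : SimK k u v) (h' : SimK k v w) : SimK k u w :=
  fun t ht => (h t ht).trans (h' t ht)

lemma simK_le_length {K : ℕ} {x y : List A} (h : SimK K x y) {n : ℕ}
    (hx : n ≤ x.length) (hn : n ≤ K) : n ≤ y.length := by
  have h1 : (x.take n).Sublist y := by
    refine (h (x.take n) ?_).mp (List.take_sublist _ _)
    simp [List.length_take]
    omega
  have := h1.length_le
  simp [List.length_take] at this
  omega

lemma simK_eq_of_short {K : ℕ} {x y : List A} (h : SimK K x y) (hx : x.length < K) : x = y := by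
  have hy : y.length < K := by
    by_contra hc
    push_neg at hc
    have := simK_le_length (simK_symm h) hc (le_refl K)
    omega
  exact List.Sublist.antisymm ((h x (by omega)).mp (List.Sublist.refl x))
    ((h y (by omega)).mpr (List.Sublist.refl y))

lemma extractW_sublist (x : List A) (K : Finset (Fin x.length)) : extractW x K <+ x := by
  have h : ((List.finRange x.length).filter (fun i => i ∈ K)).map x.get <+
      (List.finRange x.length).map x.get := List.filter_sublist.map _
  rwa [List.map_get_finRange] at h

lemma exists_sublist_of_mem_interpL {C : Set A} {L L' : Set (List A)} {x : List A}
    (h : x ∈ interpL C L L') : ∃ u ∈ L, u <+ x := by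
  obtain ⟨u, hu, v, hv, K, K', -, hK, -, -⟩ := h
  exact ⟨u, hu, hK ▸ extractW_sublist x K⟩

lemma mem_shuffleL_of {L L' : Set (List A)} {u y : List A} (hu : u ∈ L) (hsub : u <+ y)
    (hv : ∀ v : List A, v.length = y.length - u.length → v ∈ L') : y ∈ shuffleL L L' := by
  classical
  obtain ⟨f, hf⟩ := List.sublist_iff_exists_fin_orderEmbedding_get_eq.mp hsub
  set K : Finset (Fin y.length) := Finset.univ.image f with hKdef
  haveI : IsAntisymm (Fin y.length) (· < ·) := ⟨fun a b h h' => absurd h' (lt_asymm h)⟩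
  have hlist : (List.finRange y.length).filter (fun i => i ∈ K) =
      (List.finRange u.length).map f := by
    refine (fun hp h1 h2 => List.Perm.eq_of_pairwise' (r := (· < ·)) h1 h2 hp) ?_ ?_ ?_
    · apply List.perm_of_nodup_nodup_toFinset_eq
      · exact ((List.nodup_finRange _).filter _)
      · exact (List.pairwise_lt_finRange _).map f (fun a b hab => f.lt_iff_lt.mpr hab)
          |>.imp ne_of_lt
      · ext j
        simp [hKdef, List.mem_filter, List.mem_finRange, eq_comm]
    · exact List.Pairwise.filter _ (List.pairwise_lt_finRange _)
    · exact (List.pairwise_lt_finRange _).map f (fun a b hab => f.lt_iff_lt.mpr hab)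
  have h1 : extractW y K = u := by
    rw [extractW, hlist, List.map_map]
    have hcomp : y.get ∘ f = u.get := funext fun i => (hf i).symm
    rw [hcomp, List.map_get_finRange]
  have hlenK : ((List.finRange y.length).filter (fun i => i ∈ K)).length = u.length := by
    have := congrArg List.length h1
    simpa [extractW] using this
  have h2 : (extractW y Kᶜ).length = y.length - u.length := by
    have htot := List.length_eq_length_filter_add (l := List.finRange y.length)
      (fun i => decide (i ∈ K))
    have hcongr : (List.finRange y.length).filter (fun i => i ∈ Kᶜ) =
        (List.finRange y.length).filter (fun i => !(decide (i ∈ K))) := by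
      apply List.filter_congr
      intro i _
      simp [Finset.mem_compl]
    rw [extractW, List.length_map, hcongr]
    simp only [List.length_finRange] at htot
    have : ((List.finRange y.length).filter (fun i => decide (i ∈ K))).length = u.length := hlenK
    omega
  refine ⟨u, hu, extractW y Kᶜ, hv _ h2, K, Kᶜ, Finset.union_compl K, h1, rfl, ?_⟩
  intro a ha
  rw [Finset.inter_compl] at ha
  simp [extractW] at ha

/-- Every word has a short `∼ₖ`-equivalent subword, with a uniform length bound. -/
lemma exists_min_rep [Fintype A] (k : ℕ) :
    ∃ B : ℕ, ∀ u : List A, ∃ w, w <+ u ∧ SimK k w u ∧ w.length ≤ B := by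
  classical
  set M : Set (List A) := {w | ∀ w', w' <+ w → w' ≠ w → ¬ SimK k w' w} with hMdef
  -- Step A: every word has a minimal equivalent subword
  have hA : ∀ n (u : List A), u.length ≤ n → ∃ w, w <+ u ∧ SimK k w u ∧ w ∈ M := by
    intro n
    induction n with
    | zero =>
      intro u hu
      refine ⟨u, List.Sublist.refl u, simK_refl k u, ?_⟩
      intro w' hs hne _
      exact hne (List.eq_nil_of_length_eq_zero (Nat.le_zero.mp
        (hs.length_le.trans hu)) ▸ (List.eq_nil_of_length_eq_zero (Nat.le_zero.mp hu)) ▸ rfl)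
    | succ n ih =>
      intro u hu
      by_cases hM : u ∈ M
      · exact ⟨u, List.Sublist.refl u, simK_refl k u, hM⟩
      · simp only [hMdef, Set.mem_setOf_eq, not_forall] at hM
        obtain ⟨w', hs, hne, hsim⟩ := hM
        rw [not_not] at hsim
        have hlt : w'.length < u.length := by
          rcases Nat.lt_or_ge w'.length u.length with h | h
          · exact h
          · exact absurd (hs.eq_of_length (le_antisymm hs.length_le h)) hne
        obtain ⟨w, hw1, hw2, hw3⟩ := ih w' (by omega)
        exact ⟨w, hw1.trans hs, simK_trans hw2 hsim, hw3⟩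
  -- Step B: the set of minimal words is finite
  have hMfin : M.Finite := by
    by_contra hinf
    replace hinf : M.Infinite := hinf
    set φ : List A → Set (List A) := fun w => {v | v.length ≤ k ∧ v <+ w} with hφdef
    have hφsim : ∀ a b : List A, φ a = φ b → SimK k a b := by
      intro a b hab w hw
      constructor
      · intro h
        have : w ∈ φ a := ⟨hw, h⟩
        rw [hab] at this
        exact this.2
      · intro h
        have : w ∈ φ b := ⟨hw, h⟩
        rw [← hab] at this
        exact this.2
    have himfin : (φ '' M).Finite := by
      have hsub : φ '' M ⊆ {t | t ⊆ {v : List A | v.length ≤ k}} := by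
        rintro t ⟨w, -, rfl⟩
        intro v hv
        exact hv.1
      exact Set.Finite.subset (List.finite_length_le A k).finite_subsets hsub
    -- some fiber is infinite
    have : ∃ c ∈ φ '' M, {w ∈ M | φ w = c}.Infinite := by
      by_contra hc
      push_neg at hc
      apply hinf
      have : M ⊆ ⋃ c ∈ φ '' M, {w ∈ M | φ w = c} := by
        intro w hw
        exact Set.mem_biUnion (Set.mem_image_of_mem φ hw) ⟨hw, rfl⟩
      refine Set.Finite.subset (Set.Finite.biUnion himfin ?_) this
      intro c hcmem
      rw [← Set.not_infinite]
      exact fun h => h (hc c hcmem)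
    obtain ⟨c, -, hcinf⟩ := this
    -- Higman's lemma: sublist order is a pwo
    have hpwo : {l : List A | ∀ x ∈ l, x ∈ (Set.univ : Set A)}.PartiallyWellOrderedOn
        (List.SublistForall₂ (· = · : A → A → Prop)) :=
      Set.PartiallyWellOrderedOn.partiallyWellOrderedOn_sublistForall₂ _
        (Set.finite_univ.partiallyWellOrderedOn)
    set g := hcinf.natEmbedding
    obtain ⟨m, n, hmn, hrel⟩ := hpwo.exists_lt (f := fun i => (g i : List A)) (fun i x _ => Set.mem_univ x)
    have hsub : (g m : List A) <+ (g n : List A) := by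
      rw [List.sublistForall₂_iff] at hrel
      obtain ⟨l, hl1, hl2⟩ := hrel
      rw [List.forall₂_eq_eq_eq] at hl1
      exact hl1 ▸ hl2
    have hne : (g m : List A) ≠ (g n : List A) := by
      intro h
      exact absurd (g.injective (Subtype.ext h)) (Nat.ne_of_lt hmn)
    have hsim : SimK k (g m : List A) (g n : List A) := by
      apply hφsim
      rw [(g m).2.2, (g n).2.2]
    exact ((g n).2.1 (g m : List A) hsub hne) hsim
  -- Step C: extract the bound
  obtain ⟨B, hB⟩ := (hMfin.image List.length).bddAbove
  refine ⟨B, fun u => ?_⟩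
  obtain ⟨w, h1, h2, h3⟩ := hA u.length u (le_refl _)
  exact ⟨w, h1, h2, hB (Set.mem_image_of_mem _ h3)⟩

theorem stmt15 {A : Type*} [Fintype A] (L : Set (List A)) (hL : PT L)
    (L' : Set (List A)) (hL' : (L'ᶜ).Finite) : PT (shuffleL L L') := by
  classical
  obtain ⟨k, hk⟩ := hL
  obtain ⟨B, hB⟩ := exists_min_rep (A := A) k
  obtain ⟨N₀, hN₀⟩ := (hL'.image List.length).bddAbove
  set N := N₀ + 1 with hNdef
  have hN : ∀ v : List A, N ≤ v.length → v ∈ L' := by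
    intro v hv
    by_contra hvc
    have := hN₀ (Set.mem_image_of_mem List.length hvc)
    have : v.length ≤ N₀ := this
    omega
  refine ⟨B + N, ?_⟩
  have key : ∀ x y : List A, SimK (B + N) x y →
      x ∈ shuffleL L L' → y ∈ shuffleL L L' := by
    intro x y hxy hx
    by_cases hshort : x.length < B + N
    · exact (simK_eq_of_short hxy hshort) ▸ hx
    · push_neg at hshort
      obtain ⟨u, hu, hsub⟩ := exists_sublist_of_mem_interpL hx
      obtain ⟨w, hw1, hw2, hw3⟩ := hB u
      have hwL : w ∈ L := (hk w u hw2).mpr hu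
      have hwsuby : w <+ y := (hxy w (by omega)).mp (hw1.trans hsub)
      have hylen : w.length + N ≤ y.length := by
        have := simK_le_length hxy (n := w.length + N) (by omega) (by omega)
        omega
      refine mem_shuffleL_of hwL hwsuby (fun v hv => hN v ?_)
      omega
  intro p q hpq
  exact ⟨key p q hpq, key q p (simK_symm hpq)⟩
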